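/- arXiv:1208.4430 — 2 statements merged into one kernel-verified Lean document; each statement's English description precedes it below -/
import Mathlib

section
/- Let q be the standard nondegenerate quadratic form on ℂ^(2n), q(x) = x₁² + ⋯ + x_{2n}². Then the Clifford algebra Cl(q) is isomorphic as a ℂ-algebra to the matrix algebra of 2ⁿ × 2ⁿ complex matrices. -/
open CliffordAlgebra Complex

noncomputable section Stmt6Aux

def Qfin (k : ℕ) : QuadraticForm ℂ (Fin k → ℂ) :=
  QuadraticMap.weightedSumSquares ℂ (fun _ : Fin k => (1:ℂ))

lemma Qfin_apply (k : ℕ) (x : Fin k → ℂ) : Qfin k x = ∑ i, x i ^ 2 := by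
  simp [Qfin, QuadraticMap.weightedSumSquares_apply, sq]

abbrev Q2 : QuadraticForm ℂ (Fin 2 → ℂ) := Qfin 2

def fb : (Fin 2 → ℂ) →ₗ[ℂ] Matrix (Fin 2) (Fin 2) ℂ where
  toFun y := !![0, y 0 + I * y 1; y 0 - I * y 1, 0]
  map_add' y z := by ext i j; fin_cases i <;> fin_cases j <;> simp <;> ring
  map_smul' c y := by ext i j; fin_cases i <;> fin_cases j <;> simp <;> ring

lemma fb_cond (y : Fin 2 → ℂ) : fb y * fb y = algebraMap ℂ _ (Q2 y) := by
  ext i j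
  rw [Matrix.mul_apply]
  fin_cases i <;> fin_cases j <;>
    simp [fb, Fin.sum_univ_two, Matrix.algebraMap_matrix_apply, Qfin_apply] <;>
    (ring_nf; simp [Complex.I_sq]) <;> ring

def φ₂ : CliffordAlgebra Q2 →ₐ[ℂ] Matrix (Fin 2) (Fin 2) ℂ :=
  CliffordAlgebra.lift Q2 ⟨fb, fb_cond⟩

def e2 : CliffordAlgebra Q2 := ι Q2 ![1,0]
def f2 : CliffordAlgebra Q2 := ι Q2 ![0,1]

lemma e2_sq : e2 * e2 = 1 := by
  rw [e2, ι_sq_scalar]; norm_num [Qfin_apply, Fin.sum_univ_two]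

lemma f2_sq : f2 * f2 = 1 := by
  rw [f2, ι_sq_scalar]; norm_num [Qfin_apply, Fin.sum_univ_two]

lemma f2_mul_e2 : f2 * e2 = -(e2 * f2) := by
  have h := ι_mul_ι_add_swap (Q := Q2) ![1,0] ![0,1]
  have hp : QuadraticMap.polar Q2 ![1,0] ![0,1] = 0 := by
    simp [QuadraticMap.polar, Qfin_apply, Fin.sum_univ_two]
  rw [hp, map_zero] at h
  rw [e2, f2]
  linear_combination (norm := noncomm_ring) h

lemma l1 : e2 * (e2 * f2) = f2 := by rw [← mul_assoc, e2_sq, one_mul]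
lemma l3 : f2 * (e2 * f2) = -e2 := by
  rw [← mul_assoc, f2_mul_e2, neg_mul, mul_assoc, f2_sq, mul_one]
lemma l4 : (e2 * f2) * e2 = -f2 := by
  rw [mul_assoc, f2_mul_e2, mul_neg, ← mul_assoc, e2_sq, one_mul]
lemma l5 : (e2 * f2) * f2 = e2 := by rw [mul_assoc, f2_sq, mul_one]
lemma l6 : (e2 * f2) * (e2 * f2) = -1 := by rw [← mul_assoc, l4, neg_mul, f2_sq]

lemma ι_Q2_eq (y : Fin 2 → ℂ) : ι Q2 y = y 0 • e2 + y 1 • f2 := by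
  have : y = y 0 • ![1,0] + y 1 • ![0,1] := by funext i; fin_cases i <;> simp
  rw [e2, f2, ← map_smul, ← map_smul, ← map_add, ← this]

lemma span_Q2 (a : CliffordAlgebra Q2) :
    a ∈ Submodule.span ℂ ({1, e2, f2, e2 * f2} : Set (CliffordAlgebra Q2)) := by
  set T := Submodule.span ℂ ({1, e2, f2, e2 * f2} : Set (CliffordAlgebra Q2)) with hT
  have h1 : (1 : CliffordAlgebra Q2) ∈ T := Submodule.subset_span (by simp)
  have he : e2 ∈ T := Submodule.subset_span (by simp)
  have hf : f2 ∈ T := Submodule.subset_span (by simp)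
  have hef : e2 * f2 ∈ T := Submodule.subset_span (by simp)
  induction a using CliffordAlgebra.induction with
  | algebraMap r => rw [Algebra.algebraMap_eq_smul_one]; exact T.smul_mem _ h1
  | ι x => rw [ι_Q2_eq]; exact T.add_mem (T.smul_mem _ he) (T.smul_mem _ hf)
  | mul a b ha hb =>
      induction ha using Submodule.span_induction with
      | mem x hx =>
          induction hb using Submodule.span_induction with
          | mem y hy =>
              simp only [Set.mem_insert_iff, Set.mem_singleton_iff] at hx hy
              rcases hx with rfl | rfl | rfl | rfl <;> rcases hy with rfl | rfl | rfl | rfl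
              · rw [one_mul]; exact h1
              · rw [one_mul]; exact he
              · rw [one_mul]; exact hf
              · rw [one_mul]; exact hef
              · rw [mul_one]; exact he
              · rw [e2_sq]; exact h1
              · exact hef
              · rw [l1]; exact hf
              · rw [mul_one]; exact hf
              · rw [f2_mul_e2]; exact T.neg_mem hef
              · rw [f2_sq]; exact h1
              · rw [l3]; exact T.neg_mem he
              · rw [mul_one]; exact hef
              · rw [l4]; exact T.neg_mem hf
              · rw [l5]; exact he
              · rw [l6]; exact T.neg_mem h1
          | zero => simpa using T.zero_mem
          | add y z _ _ iy iz => rw [left_distrib]; exact T.add_mem iy iz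
          | smul c y _ iy => rw [mul_smul_comm]; exact T.smul_mem c iy
      | zero => simpa using T.zero_mem
      | add y z _ _ iy iz => rw [right_distrib]; exact T.add_mem iy iz
      | smul c y _ iy => rw [smul_mul_assoc]; exact T.smul_mem c iy
  | add a b ha hb => exact T.add_mem ha hb

def p11 : CliffordAlgebra Q2 := (2⁻¹ : ℂ) • (1 + I • (e2 * f2))
def p12 : CliffordAlgebra Q2 := p11 * e2
def p21 : CliffordAlgebra Q2 := e2 * p11
def p22 : CliffordAlgebra Q2 := 1 - p11

/-- linear retraction -/
def rb : Matrix (Fin 2) (Fin 2) ℂ →ₗ[ℂ] CliffordAlgebra Q2 where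
  toFun M := M 0 0 • p11 + M 0 1 • p12 + M 1 0 • p21 + M 1 1 • p22
  map_add' M N := by simp [add_smul]; abel
  map_smul' c M := by simp [smul_smul, smul_add]

lemma φ₂_e2 : φ₂ e2 = !![0,1;1,0] := by
  rw [φ₂, e2, lift_ι_apply]
  ext i j; fin_cases i <;> fin_cases j <;> simp [fb]

lemma φ₂_f2 : φ₂ f2 = !![0,I;-I,0] := by
  rw [φ₂, f2, lift_ι_apply]
  ext i j; fin_cases i <;> fin_cases j <;> simp [fb]

lemma rb_φ₂ (a : CliffordAlgebra Q2) : rb (φ₂ a) = a := by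
  have key : ∀ x ∈ ({1, e2, f2, e2 * f2} : Set (CliffordAlgebra Q2)), rb (φ₂ x) = x := by
    rintro x (rfl | rfl | rfl | rfl)
    · simp only [map_one]
      show (1:Matrix (Fin 2) (Fin 2) ℂ) 0 0 • p11 + _ + _ + _ = _
      norm_num [Matrix.one_apply, p22]
    · rw [φ₂_e2]
      show (0:ℂ) • p11 + (1:ℂ) • p12 + (1:ℂ) • p21 + (0:ℂ) • p22 = e2
      rw [p12, p21, p11]
      simp only [zero_smul, one_smul, zero_add, add_zero, smul_mul_assoc, mul_smul_comm,
        add_mul, mul_add, one_mul, mul_one, l1, l4]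
      module
    · rw [φ₂_f2]
      show (0:ℂ) • p11 + (I:ℂ) • p12 + (-I:ℂ) • p21 + (0:ℂ) • p22 = f2
      rw [p12, p21, p11]
      simp only [zero_smul, one_smul, zero_add, add_zero, smul_mul_assoc, mul_smul_comm,
        add_mul, mul_add, one_mul, mul_one, l1, l4]
      match_scalars <;> first | (ring_nf; simp [Complex.I_sq]) | ring_nf
    · rw [map_mul, φ₂_e2, φ₂_f2]
      have : (!![0,1;1,0] * !![0,I;-I,0] : Matrix (Fin 2) (Fin 2) ℂ) = !![-I,0;0,I] := by
        ext i j; rw [Matrix.mul_apply]; fin_cases i <;> fin_cases j <;> simp [Fin.sum_univ_two]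
      rw [this]
      show (-I:ℂ) • p11 + (0:ℂ) • p12 + (0:ℂ) • p21 + (I:ℂ) • p22 = e2 * f2
      rw [p22, p11]
      match_scalars <;> first | (ring_nf; simp [Complex.I_sq]) | ring_nf
  have : a ∈ Submodule.span ℂ ({1, e2, f2, e2 * f2} : Set (CliffordAlgebra Q2)) := span_Q2 a
  induction this using Submodule.span_induction with
  | mem x hx => exact key x hx
  | zero => simp
  | add y z _ _ iy iz => rw [map_add, map_add, iy, iz]
  | smul c y _ iy => rw [map_smul, map_smul, iy]

lemma φ₂_p11 : φ₂ p11 = !![1,0;0,0] := by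
  rw [p11, map_smul, map_add, map_one, map_smul, map_mul, φ₂_e2, φ₂_f2]
  ext i j
  fin_cases i <;> fin_cases j <;>
    simp [Matrix.mul_apply, Fin.sum_univ_two, Matrix.one_apply, Complex.I_mul_I] <;> norm_num

lemma φ₂_p12 : φ₂ p12 = !![0,1;0,0] := by
  rw [p12, map_mul, φ₂_p11, φ₂_e2]
  ext i j; rw [Matrix.mul_apply]; fin_cases i <;> fin_cases j <;> simp [Fin.sum_univ_two]

lemma φ₂_p21 : φ₂ p21 = !![0,0;1,0] := by
  rw [p21, map_mul, φ₂_p11, φ₂_e2]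
  ext i j; rw [Matrix.mul_apply]; fin_cases i <;> fin_cases j <;> simp [Fin.sum_univ_two]

lemma φ₂_p22 : φ₂ p22 = !![0,0;0,1] := by
  rw [p22, map_sub, map_one, φ₂_p11]
  ext i j; fin_cases i <;> fin_cases j <;> simp [Matrix.one_apply]

lemma φ₂_rb (M : Matrix (Fin 2) (Fin 2) ℂ) : φ₂ (rb M) = M := by
  show φ₂ (M 0 0 • p11 + M 0 1 • p12 + M 1 0 • p21 + M 1 1 • p22) = M
  simp only [map_add, map_smul, φ₂_p11, φ₂_p12, φ₂_p21, φ₂_p22]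
  ext i j; fin_cases i <;> fin_cases j <;> simp

def baseEquiv : CliffordAlgebra Q2 ≃ₐ[ℂ] Matrix (Fin 2) (Fin 2) ℂ :=
  AlgEquiv.ofBijective φ₂
    ⟨fun a b h => by rw [← rb_φ₂ a, ← rb_φ₂ b, h], fun M => ⟨rb M, φ₂_rb M⟩⟩


/-- generic anticommutation -/
lemma anticomm {N : Type*} [AddCommGroup N] [Module ℂ N] {Q' : QuadraticForm ℂ N}
    {v w : N} (h : QuadraticMap.polar (⇑Q') v w = 0) :
    ι Q' w * ι Q' v = -(ι Q' v * ι Q' w) := by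
  have h2 := ι_mul_ι_add_swap (Q := Q') v w
  rw [h, map_zero] at h2
  linear_combination (norm := noncomm_ring) h2

section Step

variable {MM : Type*} [AddCommGroup MM] [Module ℂ MM] (Q : QuadraticForm ℂ MM)

local notation "QP" => QuadraticMap.prod Q Q2

def EE : CliffordAlgebra QP := ι QP (0, ![1,0])
def FF : CliffordAlgebra QP := ι QP (0, ![0,1])
def UU (m : MM) : CliffordAlgebra QP := ι QP (m, 0)

lemma QP_apply (m : MM) (y : Fin 2 → ℂ) : QP (m, y) = Q m + (y 0 ^2 + y 1 ^2) := by
  rw [QuadraticMap.prod_apply]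
  simp [Qfin_apply, Fin.sum_univ_two]

lemma EE_sq : EE Q * EE Q = 1 := by
  rw [EE, ι_sq_scalar, QP_apply]; norm_num

lemma FF_sq : FF Q * FF Q = 1 := by
  rw [FF, ι_sq_scalar, QP_apply]; norm_num

lemma FF_mul_EE : FF Q * EE Q = -(EE Q * FF Q) := by
  refine anticomm ?_
  simp [QuadraticMap.polar, QP_apply, Qfin_apply, Fin.sum_univ_two]
  try ring

lemma EE_mul_UU (m : MM) : EE Q * UU Q m = -(UU Q m * EE Q) := by
  refine anticomm ?_
  simp [QuadraticMap.polar, QP_apply, Qfin_apply, Fin.sum_univ_two]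
  try ring

lemma FF_mul_UU (m : MM) : FF Q * UU Q m = -(UU Q m * FF Q) := by
  refine anticomm ?_
  simp [QuadraticMap.polar, QP_apply, Qfin_apply, Fin.sum_univ_two]
  try ring

lemma EF_mul_EF : (EE Q * FF Q) * (EE Q * FF Q) = -1 := by
  rw [mul_assoc, ← mul_assoc (FF Q), FF_mul_EE, neg_mul, mul_neg, mul_assoc (EE Q),
    FF_sq, mul_one, EE_sq]

lemma EF_mul_UU (m : MM) : (EE Q * FF Q) * UU Q m = UU Q m * (EE Q * FF Q) := by
  rw [mul_assoc, FF_mul_UU, mul_neg, ← mul_assoc, EE_mul_UU, neg_mul, neg_neg, mul_assoc]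

lemma EF_mul_EE : (EE Q * FF Q) * EE Q = -(FF Q) := by
  rw [mul_assoc, FF_mul_EE, mul_neg, ← mul_assoc, EE_sq, one_mul]

lemma EF_mul_FF : (EE Q * FF Q) * FF Q = EE Q := by
  rw [mul_assoc, FF_sq, mul_one]


lemma smul_algebraMap' {A : Type*} [Ring A] [Algebra ℂ A] (c x : ℂ) :
    c • (algebraMap ℂ A) x = algebraMap ℂ A (c * x) := by
  rw [Algebra.smul_def, ← map_mul]

/-- the defining linear map of the representation -/
def FP : (MM × (Fin 2 → ℂ)) →ₗ[ℂ] Matrix (Fin 2) (Fin 2) (CliffordAlgebra Q) where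
  toFun v := !![ι Q v.1, algebraMap ℂ _ (v.2 0 + I * v.2 1);
                algebraMap ℂ _ (v.2 0 - I * v.2 1), -(ι Q v.1)]
  map_add' v w := by
    ext i j
    fin_cases i <;> fin_cases j
    · simp [map_add]
    · show (algebraMap ℂ (CliffordAlgebra Q)) ((v + w).2 0 + I * (v + w).2 1) =
        (algebraMap ℂ (CliffordAlgebra Q)) (v.2 0 + I * v.2 1) +
        (algebraMap ℂ (CliffordAlgebra Q)) (w.2 0 + I * w.2 1)
      rw [← map_add]; congr 1; simp; ring
    · show (algebraMap ℂ (CliffordAlgebra Q)) ((v + w).2 0 - I * (v + w).2 1) =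
        (algebraMap ℂ (CliffordAlgebra Q)) (v.2 0 - I * v.2 1) +
        (algebraMap ℂ (CliffordAlgebra Q)) (w.2 0 - I * w.2 1)
      rw [← map_add]; congr 1; simp; ring
    · simp [map_add]; abel
  map_smul' c v := by
    ext i j
    fin_cases i <;> fin_cases j
    · simp
    · show (algebraMap ℂ (CliffordAlgebra Q)) ((c • v).2 0 + I * (c • v).2 1) =
        c • (algebraMap ℂ (CliffordAlgebra Q)) (v.2 0 + I * v.2 1)
      rw [smul_algebraMap']; congr 1; simp; ring
    · show (algebraMap ℂ (CliffordAlgebra Q)) ((c • v).2 0 - I * (c • v).2 1) =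
        c • (algebraMap ℂ (CliffordAlgebra Q)) (v.2 0 - I * v.2 1)
      rw [smul_algebraMap']; congr 1; simp; ring
    · simp


lemma FP_cond (v : MM × (Fin 2 → ℂ)) : FP Q v * FP Q v = algebraMap ℂ _ (QP v) := by
  obtain ⟨m, y⟩ := v
  ext i j
  rw [Matrix.mul_apply]
  fin_cases i <;> fin_cases j <;>
    simp only [FP, LinearMap.coe_mk, AddHom.coe_mk, Fin.sum_univ_two, Fin.isValue,
      Matrix.cons_val', Matrix.cons_val_zero, Matrix.cons_val_one, Matrix.head_cons,
      Matrix.head_fin_const, Matrix.empty_val', Matrix.cons_val_fin_one,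
      Matrix.algebraMap_matrix_apply, if_true, if_false, Matrix.of_apply, ne_eq,
      Fin.zero_eta, Fin.mk_one, one_ne_zero, not_false_eq_true, zero_ne_one, ite_true, ite_false]
  · rw [ι_sq_scalar, ← map_mul, ← map_add]
    congr 1
    rw [QP_apply]; ring_nf; rw [I_sq]; ring
  · rw [mul_neg, Algebra.commutes]; abel
  · rw [neg_mul, Algebra.commutes]; abel
  · rw [neg_mul_neg, ι_sq_scalar, ← map_mul, ← map_add]
    congr 1
    rw [QP_apply]; ring_nf; rw [I_sq]; ring

def φP : CliffordAlgebra QP →ₐ[ℂ] Matrix (Fin 2) (Fin 2) (CliffordAlgebra Q) :=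
  CliffordAlgebra.lift QP ⟨FP Q, FP_cond Q⟩

lemma φP_ι (v : MM × (Fin 2 → ℂ)) : φP Q (ι QP v) = FP Q v := lift_ι_apply _ _ _

lemma φP_EE : φP Q (EE Q) = !![0, 1; 1, 0] := by
  rw [EE, φP_ι]
  ext i j
  fin_cases i <;> fin_cases j <;> simp [FP]

lemma φP_FF : φP Q (FF Q) = !![0, algebraMap ℂ _ I; algebraMap ℂ _ (-I), 0] := by
  rw [FF, φP_ι]
  ext i j
  fin_cases i <;> fin_cases j <;> simp [FP]

lemma φP_UU (m : MM) : φP Q (UU Q m) = !![ι Q m, 0; 0, -(ι Q m)] := by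
  rw [UU, φP_ι]
  ext i j
  fin_cases i <;> fin_cases j <;> simp [FP]

-- trailing-variable versions of the relations, giving a confluent-ish rewrite system
lemma EE_EE' (x) : EE Q * (EE Q * x) = x := by rw [← mul_assoc, EE_sq, one_mul]
lemma FF_FF' (x) : FF Q * (FF Q * x) = x := by rw [← mul_assoc, FF_sq, one_mul]
lemma FF_EE' (x) : FF Q * (EE Q * x) = -(EE Q * (FF Q * x)) := by
  rw [← mul_assoc, FF_mul_EE, ← mul_assoc, neg_mul]
lemma EE_UU' (m x) : EE Q * (UU Q m * x) = -(UU Q m * (EE Q * x)) := by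
  rw [← mul_assoc, EE_mul_UU, ← mul_assoc, neg_mul]
lemma FF_UU' (m x) : FF Q * (UU Q m * x) = -(UU Q m * (FF Q * x)) := by
  rw [← mul_assoc, FF_mul_UU, ← mul_assoc, neg_mul]
lemma UU_UU (m) : UU Q m * UU Q m = Q m • 1 := by
  rw [UU, ι_sq_scalar, QP_apply, Algebra.algebraMap_eq_smul_one]
  norm_num
lemma UU_UU' (m x) : UU Q m * (UU Q m * x) = Q m • x := by
  rw [← mul_assoc, UU_UU, smul_mul_assoc, one_mul]

/-- the embedding `Cl Q → Cl (Q.prod Q2)`, `m ↦ I • (U m * E * F)`. -/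
def GG : MM →ₗ[ℂ] CliffordAlgebra QP :=
  I • ((LinearMap.mulRight ℂ (EE Q * FF Q)).comp
    ((ι QP).comp (LinearMap.inl ℂ MM (Fin 2 → ℂ))))

lemma GG_apply (m : MM) : GG Q m = I • (UU Q m * (EE Q * FF Q)) := rfl

lemma GG_cond (m : MM) : GG Q m * GG Q m = algebraMap ℂ _ (Q m) := by
  rw [GG_apply, Algebra.algebraMap_eq_smul_one]
  simp only [mul_assoc, smul_mul_assoc, mul_smul_comm, smul_smul, mul_one, one_mul,
    mul_neg, neg_mul, neg_neg, smul_neg, neg_smul,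
    EE_sq, EE_EE', FF_sq, FF_FF', FF_mul_EE, FF_EE', EE_mul_UU, EE_UU', FF_mul_UU, FF_UU',
    UU_UU, UU_UU', I_mul_I]
  match_scalars <;> first | (ring_nf; simp [I_sq]; try ring) | ring_nf

def gP : CliffordAlgebra Q →ₐ[ℂ] CliffordAlgebra QP :=
  CliffordAlgebra.lift Q ⟨GG Q, GG_cond Q⟩

lemma gP_commute_EE (a : CliffordAlgebra Q) : gP Q a * EE Q = EE Q * gP Q a := by
  induction a using CliffordAlgebra.induction with
  | algebraMap r => rw [AlgHom.commutes, Algebra.commutes]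
  | ι m =>
      rw [gP, lift_ι_apply, GG_apply]
      simp only [mul_assoc, smul_mul_assoc, mul_smul_comm, smul_smul, mul_one, one_mul,
        mul_neg, neg_mul, neg_neg, smul_neg, neg_smul,
        EE_sq, EE_EE', FF_sq, FF_FF', FF_mul_EE, FF_EE', EE_mul_UU, EE_UU', FF_mul_UU, FF_UU',
        UU_UU, UU_UU']
  | mul a b ha hb => rw [map_mul, mul_assoc, hb, ← mul_assoc, ha, mul_assoc]
  | add a b ha hb => rw [map_add, add_mul, ha, hb, mul_add]

lemma gP_commute_FF (a : CliffordAlgebra Q) : gP Q a * FF Q = FF Q * gP Q a := by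
  induction a using CliffordAlgebra.induction with
  | algebraMap r => rw [AlgHom.commutes, Algebra.commutes]
  | ι m =>
      rw [gP, lift_ι_apply, GG_apply]
      simp only [mul_assoc, smul_mul_assoc, mul_smul_comm, smul_smul, mul_one, one_mul,
        mul_neg, neg_mul, neg_neg, smul_neg, neg_smul,
        EE_sq, EE_EE', FF_sq, FF_FF', FF_mul_EE, FF_EE', EE_mul_UU, EE_UU', FF_mul_UU, FF_UU',
        UU_UU, UU_UU']
  | mul a b ha hb => rw [map_mul, mul_assoc, hb, ← mul_assoc, ha, mul_assoc]
  | add a b ha hb => rw [map_add, add_mul, ha, hb, mul_add]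

def hP : Matrix (Fin 2) (Fin 2) ℂ →ₐ[ℂ] CliffordAlgebra QP :=
  (CliffordAlgebra.map (QuadraticMap.Isometry.inr Q Q2)).comp baseEquiv.symm.toAlgHom

lemma map_inr_e2 : CliffordAlgebra.map (QuadraticMap.Isometry.inr Q Q2) e2 = EE Q := by
  rw [e2, map_apply_ι]; rfl

lemma map_inr_f2 : CliffordAlgebra.map (QuadraticMap.Isometry.inr Q Q2) f2 = FF Q := by
  rw [f2, map_apply_ι]; rfl

lemma gP_commute_inr (a : CliffordAlgebra Q) (c : CliffordAlgebra Q2) :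
    gP Q a * CliffordAlgebra.map (QuadraticMap.Isometry.inr Q Q2) c
      = CliffordAlgebra.map (QuadraticMap.Isometry.inr Q Q2) c * gP Q a := by
  induction c using CliffordAlgebra.induction with
  | algebraMap r => rw [AlgHom.commutes, Algebra.commutes]
  | ι y =>
      rw [map_apply_ι]
      have : (QuadraticMap.Isometry.inr Q Q2) y = y 0 • (0, ![1,0]) + y 1 • (0, ![0,1]) := by
        show ((0 : MM), y) = _
        have : y = y 0 • ![1,0] + y 1 • ![0,1] := by funext i; fin_cases i <;> simp
        rw [Prod.smul_mk, Prod.smul_mk, Prod.mk_add_mk, ← this]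
        simp
      rw [this, map_add, map_smul, map_smul]
      show gP Q a * (y 0 • EE Q + y 1 • FF Q) = (y 0 • EE Q + y 1 • FF Q) * gP Q a
      rw [mul_add, add_mul, mul_smul_comm, smul_mul_assoc, gP_commute_EE,
        mul_smul_comm, smul_mul_assoc, gP_commute_FF]
  | mul c d hc hd => rw [map_mul, ← mul_assoc, hc, mul_assoc, hd, ← mul_assoc]
  | add c d hc hd => rw [map_add, mul_add, hc, hd, add_mul]

def ψP : Matrix (Fin 2) (Fin 2) (CliffordAlgebra Q) →ₐ[ℂ] CliffordAlgebra QP :=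
  (Algebra.TensorProduct.lift (gP Q) (hP Q)
      (fun a b => gP_commute_inr Q a (baseEquiv.symm b))).comp
    (matrixEquivTensor (Fin 2) ℂ (CliffordAlgebra Q)).toAlgHom

def PE11 : CliffordAlgebra QP := (2⁻¹ : ℂ) • (1 + I • (EE Q * FF Q))
def PE12 : CliffordAlgebra QP := PE11 Q * EE Q
def PE21 : CliffordAlgebra QP := EE Q * PE11 Q
def PE22 : CliffordAlgebra QP := 1 - PE11 Q

lemma std00 : (Matrix.single 0 0 1 : Matrix (Fin 2) (Fin 2) ℂ) = !![1,0;0,0] := by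
  ext i j; fin_cases i <;> fin_cases j <;> simp [Matrix.single]
lemma std01 : (Matrix.single 0 1 1 : Matrix (Fin 2) (Fin 2) ℂ) = !![0,1;0,0] := by
  ext i j; fin_cases i <;> fin_cases j <;> simp [Matrix.single]
lemma std10 : (Matrix.single 1 0 1 : Matrix (Fin 2) (Fin 2) ℂ) = !![0,0;1,0] := by
  ext i j; fin_cases i <;> fin_cases j <;> simp [Matrix.single]
lemma std11 : (Matrix.single 1 1 1 : Matrix (Fin 2) (Fin 2) ℂ) = !![0,0;0,1] := by
  ext i j; fin_cases i <;> fin_cases j <;> simp [Matrix.single]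

lemma hP_11 : hP Q !![1,0;0,0] = PE11 Q := by
  have h : baseEquiv.symm !![1,0;0,0] = p11 := by
    rw [AlgEquiv.symm_apply_eq]
    exact (φ₂_p11).symm
  show CliffordAlgebra.map _ (baseEquiv.symm !![1,0;0,0]) = _
  rw [h, p11, map_smul, map_add, map_one, map_smul, map_mul, map_inr_e2, map_inr_f2, PE11]

lemma hP_01 : hP Q !![0,1;0,0] = PE12 Q := by
  have h : baseEquiv.symm !![0,1;0,0] = p12 := by
    rw [AlgEquiv.symm_apply_eq]
    exact (φ₂_p12).symm
  show CliffordAlgebra.map _ (baseEquiv.symm !![0,1;0,0]) = _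
  rw [h, p12, map_mul, map_inr_e2, PE12]
  congr 1
  rw [p11, map_smul, map_add, map_one, map_smul, map_mul, map_inr_e2, map_inr_f2, PE11]

lemma hP_10 : hP Q !![0,0;1,0] = PE21 Q := by
  have h : baseEquiv.symm !![0,0;1,0] = p21 := by
    rw [AlgEquiv.symm_apply_eq]
    exact (φ₂_p21).symm
  show CliffordAlgebra.map _ (baseEquiv.symm !![0,0;1,0]) = _
  rw [h, p21, map_mul, map_inr_e2, PE21]
  congr 1
  rw [p11, map_smul, map_add, map_one, map_smul, map_mul, map_inr_e2, map_inr_f2, PE11]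

lemma hP_00' : hP Q !![0,0;0,1] = PE22 Q := by
  have h : baseEquiv.symm !![0,0;0,1] = p22 := by
    rw [AlgEquiv.symm_apply_eq]
    exact (φ₂_p22).symm
  show CliffordAlgebra.map _ (baseEquiv.symm !![0,0;0,1]) = _
  rw [h, p22, map_sub, map_one, PE22]
  congr 1
  rw [p11, map_smul, map_add, map_one, map_smul, map_mul, map_inr_e2, map_inr_f2, PE11]

lemma ψP_φP_ι (v : MM × (Fin 2 → ℂ)) : ψP Q (φP Q (ι QP v)) = ι QP v := by
  obtain ⟨m, y⟩ := v
  rw [φP_ι]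
  show (Algebra.TensorProduct.lift (gP Q) (hP Q)
      (fun a b => show Commute (gP Q a) (hP Q b) from gP_commute_inr Q a (baseEquiv.symm b)))
      ((matrixEquivTensor (Fin 2) ℂ (CliffordAlgebra Q)) (FP Q (m, y))) = _
  rw [matrixEquivTensor_apply]
  rw [map_sum, Fintype.sum_prod_type]
  simp only [Fin.sum_univ_two, Algebra.TensorProduct.lift_tmul]
  have e00 : FP Q (m, y) 0 0 = ι Q m := rfl
  have e01 : FP Q (m, y) 0 1 = algebraMap ℂ _ (y 0 + I * y 1) := rfl
  have e10 : FP Q (m, y) 1 0 = algebraMap ℂ _ (y 0 - I * y 1) := rfl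
  have e11 : FP Q (m, y) 1 1 = -(ι Q m) := rfl
  rw [e00, e01, e10, e11, std00, std01, std10, std11, hP_11, hP_01, hP_10, hP_00',
    AlgHom.commutes, AlgHom.commutes, map_neg]
  have gιm : gP Q (ι Q m) = I • (UU Q m * (EE Q * FF Q)) := by
    rw [gP, lift_ι_apply, GG_apply]
  have hιv : ι QP (m, y) = UU Q m + (y 0 • EE Q + y 1 • FF Q) := by
    have hv : (m, y) = (m, (0 : Fin 2 → ℂ)) + (y 0 • ((0:MM), ![1,0]) + y 1 • ((0:MM), ![0,1])) := by
      have hy : y = y 0 • ![1,0] + y 1 • ![0,1] := by funext i; fin_cases i <;> simp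
      rw [Prod.smul_mk, Prod.smul_mk, Prod.mk_add_mk, Prod.mk_add_mk, ← hy]
      simp
    rw [hv, map_add, map_add, map_smul, map_smul]
    rfl
  rw [gιm, hιv, PE22, PE21, PE12, PE11, ← Algebra.smul_def, ← Algebra.smul_def]
  simp only [mul_assoc, smul_mul_assoc, mul_smul_comm, smul_smul, mul_one, one_mul,
    mul_neg, neg_mul, neg_neg, smul_neg, neg_smul, mul_add, add_mul, mul_sub, sub_mul,
    smul_add, smul_sub, one_mul, mul_one,
    EE_sq, EE_EE', FF_sq, FF_FF', FF_mul_EE, FF_EE', EE_mul_UU, EE_UU', FF_mul_UU, FF_UU',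
    UU_UU, UU_UU']
  match_scalars <;> first | (ring_nf; simp [I_sq]; try ring) | ring_nf

lemma ψP_φP (a : CliffordAlgebra QP) : ψP Q (φP Q a) = a := by
  have : (ψP Q).comp (φP Q) = AlgHom.id ℂ _ := by
    apply CliffordAlgebra.hom_ext
    apply LinearMap.ext
    intro v
    simpa using ψP_φP_ι Q v
  calc ψP Q (φP Q a) = ((ψP Q).comp (φP Q)) a := rfl
    _ = a := by rw [this]; rfl

lemma φP_gP (a : CliffordAlgebra Q) :
    φP Q (gP Q a) = Matrix.diagonal (fun _ => a) := by
  induction a using CliffordAlgebra.induction with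
  | algebraMap r =>
      rw [AlgHom.commutes]
      ext i j
      fin_cases i <;> fin_cases j <;>
        simp [Matrix.algebraMap_matrix_apply, Matrix.diagonal]
  | ι m =>
      have gιm : gP Q (ι Q m) = I • (UU Q m * (EE Q * FF Q)) := by
        rw [gP, lift_ι_apply, GG_apply]
      rw [gιm, map_smul, map_mul, map_mul, φP_UU, φP_EE, φP_FF]
      ext i j
      fin_cases i <;> fin_cases j <;>
        simp [Matrix.mul_apply, Fin.sum_univ_two, Matrix.diagonal, mul_smul_comm,
          smul_algebraMap'] <;>
        rw [← Algebra.commutes, ← Algebra.smul_def, smul_smul, I_mul_I] <;> simp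
  | mul a b ha hb => rw [map_mul, map_mul, ha, hb, Matrix.diagonal_mul_diagonal]
  | add a b ha hb => rw [map_add, map_add, ha, hb, Matrix.diagonal_add]

lemma φP_PE11 : φP Q (PE11 Q) = !![1,0;0,0] := by
  rw [PE11, map_smul, map_add, map_one, map_smul, map_mul, φP_EE, φP_FF]
  ext i j
  fin_cases i <;> fin_cases j <;>
    simp [Matrix.mul_apply, Fin.sum_univ_two, Matrix.one_apply, smul_algebraMap'] <;>
    first
      | (rw [show ((1 : CliffordAlgebra Q) + algebraMap ℂ (CliffordAlgebra Q) (I * I))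
              = algebraMap ℂ (CliffordAlgebra Q) (1 + I * I) from by rw [map_add, map_one]]
         norm_num)
      | (rw [← add_smul]; norm_num)
      | skip

lemma φP_PE12 : φP Q (PE12 Q) = !![0,1;0,0] := by
  rw [PE12, map_mul, φP_PE11, φP_EE]
  ext i j; rw [Matrix.mul_apply]; fin_cases i <;> fin_cases j <;> simp [Fin.sum_univ_two]

lemma φP_PE21 : φP Q (PE21 Q) = !![0,0;1,0] := by
  rw [PE21, map_mul, φP_PE11, φP_EE]
  ext i j; rw [Matrix.mul_apply]; fin_cases i <;> fin_cases j <;> simp [Fin.sum_univ_two]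

lemma φP_PE22 : φP Q (PE22 Q) = !![0,0;0,1] := by
  rw [PE22, map_sub, map_one, φP_PE11]
  ext i j; fin_cases i <;> fin_cases j <;> simp [Matrix.one_apply]

lemma φP_surj : Function.Surjective (φP Q) := by
  intro M
  refine ⟨gP Q (M 0 0) * PE11 Q + gP Q (M 0 1) * PE12 Q
    + gP Q (M 1 0) * PE21 Q + gP Q (M 1 1) * PE22 Q, ?_⟩
  simp only [map_add, map_mul, φP_gP, φP_PE11, φP_PE12, φP_PE21, φP_PE22]
  ext i j
  fin_cases i <;> fin_cases j <;>
    simp [Matrix.mul_apply, Fin.sum_univ_two, Matrix.diagonal]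

/-- The key step equivalence. -/
def stepEquiv : CliffordAlgebra QP ≃ₐ[ℂ] Matrix (Fin 2) (Fin 2) (CliffordAlgebra Q) :=
  AlgEquiv.ofBijective (φP Q)
    ⟨fun a b hab => by rw [← ψP_φP Q a, ← ψP_φP Q b, hab], φP_surj Q⟩

end Step

/-- `Cl(0) ≃ ℂ`. -/
def zeroHom : CliffordAlgebra (Qfin 0) →ₐ[ℂ] ℂ :=
  CliffordAlgebra.lift _ ⟨0, by intro m; simp [Qfin_apply]⟩

def zeroEquiv : CliffordAlgebra (Qfin 0) ≃ₐ[ℂ] ℂ :=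
  AlgEquiv.ofAlgHom zeroHom (Algebra.ofId ℂ _)
    (by ext c)
    (by
      apply CliffordAlgebra.hom_ext
      apply LinearMap.ext
      intro x
      have hx : ι (Qfin 0) x = 0 := by rw [Subsingleton.elim x 0, map_zero]
      simp [hx])

def oneByOne : ℂ ≃ₐ[ℂ] Matrix (Fin 1) (Fin 1) ℂ where
  toFun c := Matrix.diagonal (fun _ => c)
  invFun M := M 0 0
  left_inv c := rfl
  right_inv M := by ext i j; fin_cases i <;> fin_cases j <;> simp [Matrix.diagonal]
  map_mul' a b := by ext i j; fin_cases i <;> fin_cases j <;> simp [Matrix.mul_apply]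
  map_add' a b := by ext i j; fin_cases i <;> fin_cases j <;> simp
  commutes' c := by ext i j; fin_cases i <;> fin_cases j <;> simp [Matrix.algebraMap_matrix_apply]

/-- splitting off the last two coordinates, isometrically -/
def splitIso (n : ℕ) : (Qfin (2*n+2)).IsometryEquiv ((Qfin (2*n)).prod Q2) where
  toLinearEquiv :=
    (LinearEquiv.funCongrLeft ℂ ℂ (finSumFinEquiv : Fin (2*n) ⊕ Fin 2 ≃ Fin (2*n+2))).trans
      (LinearEquiv.sumArrowLequivProdArrow _ _ ℂ ℂ)
  map_app' x := by
    rw [QuadraticMap.prod_apply, Qfin_apply, Qfin_apply, Qfin_apply]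
    rw [← Equiv.sum_comp (finSumFinEquiv : Fin (2*n) ⊕ Fin 2 ≃ Fin (2*n+2))
      (fun j => x j ^ 2), Fintype.sum_sum_type]
    rfl

lemma mainEquiv (n : ℕ) :
    Nonempty (CliffordAlgebra (Qfin (2*n)) ≃ₐ[ℂ] Matrix (Fin (2^n)) (Fin (2^n)) ℂ) := by
  induction n with
  | zero => exact ⟨zeroEquiv.trans oneByOne⟩
  | succ n ih =>
      obtain ⟨ih⟩ := ih
      refine ⟨AlgEquiv.trans (AlgEquiv.trans (AlgEquiv.trans (AlgEquiv.trans
        (CliffordAlgebra.equivOfIsometry (splitIso n))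
        (stepEquiv (Qfin (2*n))))
        (AlgEquiv.mapMatrix ih))
        (Matrix.compAlgEquiv (Fin 2) (Fin (2^n)) ℂ ℂ))
        (Matrix.reindexAlgEquiv ℂ ℂ
          ((finProdFinEquiv : Fin 2 × Fin (2^n) ≃ Fin (2 * 2^n)).trans
            (finCongr (by ring))))⟩

end Stmt6Aux

theorem stmt6 (n : ℕ) (q : QuadraticForm ℂ (Fin (2 * n) → ℂ))
    (hq : ∀ x, q x = ∑ i, x i ^ 2) :
    Nonempty (CliffordAlgebra q ≃ₐ[ℂ] Matrix (Fin (2 ^ n)) (Fin (2 ^ n)) ℂ) := by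
  have hqq : q = Qfin (2*n) := by
    ext x
    rw [hq, Qfin_apply]
  rw [hqq]
  exact mainEquiv n
end

section
/- Let q be the standard quadratic form on ℂ^(2n+1). Then the Clifford algebra Cl(q) is isomorphic as a ℂ-algebra to Mat_{2ⁿ}(ℂ) × Mat_{2ⁿ}(ℂ). -/
noncomputable section
open Matrix
set_option linter.unusedSectionVars false
namespace Stmt7Aux

variable {ι : Type*} [Fintype ι] [DecidableEq ι]

def gps (f : ι → ι) (ε : ι → ℂ) : Matrix ι ι ℂ :=
  Matrix.of fun a b => if b = f a then ε a else 0

theorem gps_mul (f g : ι → ι) (ε δ : ι → ℂ) :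
    gps f ε * gps g δ = gps (g ∘ f) (fun a => ε a * δ (f a)) := by
  ext a b
  rw [Matrix.mul_apply]
  rw [Finset.sum_eq_single (f a)]
  · simp [gps, eq_comm]
  · intro c _ hc
    simp [gps, hc, Ne.symm hc]
  · simp

theorem gps_one : gps (id : ι → ι) (fun _ => 1) = 1 := by
  ext a b
  simp [gps, Matrix.one_apply, eq_comm]

theorem gps_add (f : ι → ι) (ε δ : ι → ℂ) :
    gps f ε + gps f δ = gps f (ε + δ) := by
  ext a b
  simp only [Matrix.add_apply, gps, Matrix.of_apply, Pi.add_apply]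
  split <;> simp

theorem gps_smul (c : ℂ) (f : ι → ι) (ε : ι → ℂ) :
    c • gps f ε = gps f (c • ε) := by
  ext a b
  simp only [Matrix.smul_apply, gps, Matrix.of_apply, Pi.smul_apply, smul_eq_mul]
  split <;> simp

theorem gps_zero (f : ι → ι) : gps f (0 : ι → ℂ) = 0 := by
  ext a b
  simp [gps]

theorem gps_congr {f g : ι → ι} {ε δ : ι → ℂ} (hf : f = g) (he : ε = δ) :
    gps f ε = gps g δ := by rw [hf, he]

def gpsId : (ι → ℂ) →* Matrix ι ι ℂ where
  toFun ε := gps id ε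
  map_one' := gps_one
  map_mul' ε δ := by rw [gps_mul]; rfl

section Gamma

variable (n : ℕ)

/-- index type for 2^n dimensional space -/
abbrev I (n : ℕ) := Fin n → Bool

def sg (b : Bool) : ℂ := if b then -1 else 1

theorem sg_not (b : Bool) : sg (!b) = - sg b := by cases b <;> simp [sg]
theorem sg_mul_self (b : Bool) : sg b * sg b = 1 := by cases b <;> simp [sg]
theorem sg_ne_zero (b : Bool) : sg b ≠ 0 := by cases b <;> simp [sg]

def im (b : Bool) : ℂ := if b then Complex.I else -Complex.I

theorem im_not (b : Bool) : im (!b) = - im b := by cases b <;> simp [im]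
theorem im_mul_not (b : Bool) : im b * im (!b) = 1 := by
  cases b <;> simp [im, Complex.I_mul_I]

/-- product of signs over a finset of coordinates -/
def pf (s : Finset (Fin n)) (a : I n) : ℂ := ∏ l ∈ s, sg (a l)

variable {n}

def flip (j : Fin n) (a : I n) : I n := Function.update a j (!a j)

theorem flip_apply_ne (j k : Fin n) (a : I n) (h : k ≠ j) : flip j a k = a k :=
  Function.update_of_ne h _ _

theorem flip_apply_self (j : Fin n) (a : I n) : flip j a j = !a j :=
  Function.update_self _ _ _

theorem flip_flip (j : Fin n) (a : I n) : flip j (flip j a) = a := by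
  funext k
  rcases eq_or_ne k j with rfl | h
  · rw [flip_apply_self, flip_apply_self, Bool.not_not]
  · rw [flip_apply_ne _ _ _ h, flip_apply_ne _ _ _ h]

theorem flip_comm (j k : Fin n) (h : j ≠ k) (a : I n) :
    flip j (flip k a) = flip k (flip j a) := by
  funext l
  rcases eq_or_ne l j with rfl | hj
  · rw [flip_apply_self, flip_apply_ne _ _ _ h, flip_apply_ne _ _ _ h, flip_apply_self]
  · rcases eq_or_ne l k with rfl | hk
    · rw [flip_apply_ne _ _ _ (Ne.symm h), flip_apply_self, flip_apply_self,
        flip_apply_ne _ _ _ (Ne.symm h)]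
    · rw [flip_apply_ne _ _ _ hj, flip_apply_ne _ _ _ hk, flip_apply_ne _ _ _ hk,
        flip_apply_ne _ _ _ hj]

theorem pf_flip (s : Finset (Fin n)) (k : Fin n) (a : I n) :
    pf n s (flip k a) = (if k ∈ s then -1 else 1) * pf n s a := by
  by_cases hk : k ∈ s
  · rw [if_pos hk, pf, pf, ← Finset.mul_prod_erase s _ hk, ← Finset.mul_prod_erase s _ hk,
      flip_apply_self, sg_not]
    rw [Finset.prod_congr rfl fun l hl => by
      rw [flip_apply_ne _ _ _ (Finset.ne_of_mem_erase hl)]]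
    ring
  · rw [if_neg hk, one_mul, pf, pf]
    exact Finset.prod_congr rfl fun l hl => by
      rw [flip_apply_ne _ _ _ (fun h => hk (by rw [← h]; exact hl))]

theorem pf_mul_self (s : Finset (Fin n)) (a : I n) : pf n s a * pf n s a = 1 := by
  rw [pf, ← Finset.prod_mul_distrib]
  exact Finset.prod_eq_one fun l _ => sg_mul_self _

variable (n)

def εX (j : Fin n) (a : I n) : ℂ := pf n (Finset.univ.filter (· < j)) a
def X (j : Fin n) : Matrix (I n) (I n) ℂ := gps (flip j) (εX n j)
def εY (j : Fin n) (a : I n) : ℂ := εX n j a * im (a j)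
def Y (j : Fin n) : Matrix (I n) (I n) ℂ := gps (flip j) (εY n j)
def Z : Matrix (I n) (I n) ℂ := gps id (pf n Finset.univ)

variable {n}

theorem εX_flip_self (j : Fin n) (a : I n) : εX n j (flip j a) = εX n j a := by
  rw [εX, εX, pf_flip, if_neg, one_mul]
  simp

theorem εX_flip (j k : Fin n) (a : I n) :
    εX n j (flip k a) = (if k < j then -1 else 1) * εX n j a := by
  rw [εX, εX, pf_flip]
  simp

theorem εX_mul_self (j : Fin n) (a : I n) : εX n j a * εX n j a = 1 := pf_mul_self _ _

theorem X_mul_X_self (j : Fin n) : X n j * X n j = 1 := by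
  rw [X, gps_mul, ← gps_one]
  refine gps_congr (funext fun a => flip_flip j a) (funext fun a => ?_)
  rw [εX_flip_self, εX_mul_self]

theorem Y_mul_Y_self (j : Fin n) : Y n j * Y n j = 1 := by
  rw [Y, gps_mul, ← gps_one]
  refine gps_congr (funext fun a => flip_flip j a) (funext fun a => ?_)
  simp only [εY, εX_flip_self, flip_apply_self]
  calc εX n j a * im (a j) * (εX n j a * im (!a j))
      = (εX n j a * εX n j a) * (im (a j) * im (!a j)) := by ring
    _ = 1 := by rw [εX_mul_self, im_mul_not, one_mul]

theorem Z_mul_Z : Z n * Z n = 1 := by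
  rw [Z, gps_mul, ← gps_one]
  exact gps_congr rfl (funext fun a => pf_mul_self _ _)

theorem gps_anticomm (f g : I n → I n) (hfg : f ∘ g = g ∘ f) (ε δ : I n → ℂ)
    (h : ∀ a, ε a * δ (f a) + δ a * ε (g a) = 0) :
    gps f ε * gps g δ + gps g δ * gps f ε = 0 := by
  rw [gps_mul, gps_mul, gps_congr hfg rfl, gps_add, ← gps_zero (g ∘ f)]
  exact gps_congr rfl (funext fun a => h a)

theorem X_anticomm (j k : Fin n) (h : j ≠ k) : X n j * X n k + X n k * X n j = 0 := by
  rw [X, X]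
  refine gps_anticomm (flip j) (flip k) (funext fun a => flip_comm j k h a) _ _ fun a => ?_
  simp only [Function.comp_apply, εX_flip]
  rcases lt_or_gt_of_ne h with hlt | hlt
  · rw [if_pos hlt, if_neg (not_lt_of_gt hlt)]; ring
  · rw [if_neg (not_lt_of_gt hlt), if_pos hlt]; ring

theorem XY_anticomm (j k : Fin n) : X n j * Y n k + Y n k * X n j = 0 := by
  rw [X, Y]
  rcases eq_or_ne j k with rfl | h
  · refine gps_anticomm (flip j) (flip j) rfl _ _ fun a => ?_
    simp only [Function.comp_apply, εY, εX_flip_self, flip_apply_self]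
    rw [im_not]
    ring
  · refine gps_anticomm (flip j) (flip k) (funext fun a => flip_comm j k h a) _ _ fun a => ?_
    simp only [Function.comp_apply, εY, εX_flip, flip_apply_ne _ _ _ (Ne.symm h)]
    rcases lt_or_gt_of_ne h with hlt | hlt
    · rw [if_pos hlt, if_neg (not_lt_of_gt hlt)]; ring
    · rw [if_neg (not_lt_of_gt hlt), if_pos hlt]; ring

theorem Y_anticomm (j k : Fin n) (h : j ≠ k) : Y n j * Y n k + Y n k * Y n j = 0 := by
  rw [Y, Y]
  refine gps_anticomm (flip j) (flip k) (funext fun a => flip_comm j k h a) _ _ fun a => ?_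
  simp only [Function.comp_apply, εY, εX_flip,
    flip_apply_ne _ _ _ (Ne.symm h), flip_apply_ne _ _ _ h]
  rcases lt_or_gt_of_ne h with hlt | hlt
  · rw [if_pos hlt, if_neg (not_lt_of_gt hlt)]; ring
  · rw [if_neg (not_lt_of_gt hlt), if_pos hlt]; ring

theorem pf_univ_flip (j : Fin n) (a : I n) :
    pf n Finset.univ (flip j a) = - pf n Finset.univ a := by
  rw [pf_flip, if_pos (Finset.mem_univ j), neg_one_mul]

theorem XZ_anticomm (j : Fin n) : X n j * Z n + Z n * X n j = 0 := by
  rw [X, Z]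
  refine gps_anticomm (flip j) id (funext fun a => rfl) _ _ fun a => ?_
  simp only [Function.comp_apply, id_eq, pf_univ_flip]
  ring

theorem YZ_anticomm (j : Fin n) : Y n j * Z n + Z n * Y n j = 0 := by
  rw [Y, Z]
  refine gps_anticomm (flip j) id (funext fun a => rfl) _ _ fun a => ?_
  simp only [Function.comp_apply, id_eq, pf_univ_flip]
  ring

theorem X_mul_Y_self (j : Fin n) :
    X n j * Y n j = gps id (fun a => Complex.I * sg (a j)) := by
  rw [X, Y, gps_mul]
  refine gps_congr (funext fun a => flip_flip j a) (funext fun a => ?_)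
  simp only [εY, εX_flip_self, flip_apply_self]
  calc εX n j a * (εX n j a * im (!a j))
      = (εX n j a * εX n j a) * im (!a j) := by ring
    _ = im (!a j) := by rw [εX_mul_self, one_mul]
    _ = Complex.I * sg (a j) := by cases h : a j <;> simp [im, sg]



theorem pf_ne_zero (s : Finset (Fin n)) (a : I n) : pf n s a ≠ 0 :=
  Finset.prod_ne_zero_iff.2 fun l _ => sg_ne_zero _

theorem εX_ne_zero (j : Fin n) (a : I n) : εX n j a ≠ 0 := pf_ne_zero _ _

/-- the indicator diagonal matrix, i.e. a standard diagonal basis matrix -/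
def ind (a : I n) : I n → ℂ := fun c => if c = a then 1 else 0

theorem gpsId_prod_mem {T : Subalgebra ℂ (Matrix (I n) (I n) ℂ)} (h : Fin n → (I n → ℂ))
    (hmem : ∀ j, gps id (h j) ∈ T) (s : Finset (Fin n)) :
    gps id (fun a => ∏ j ∈ s, h j a) ∈ T := by
  classical
  induction s using Finset.induction with
  | empty => simpa [gps_one] using T.one_mem
  | @insert j s hj ih =>
      have := T.mul_mem (hmem j) ih
      rw [gps_mul] at this
      convert this using 2
      all_goals funext a
      all_goals simp [Finset.prod_insert hj]

theorem sg_mul_sg_of_ne {b c : Bool} (h : b ≠ c) : sg b * sg c = -1 := by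
  cases b <;> cases c <;> simp_all [sg]

/-- diagonal basis matrices are in any subalgebra containing the σ₃'s -/
theorem ind_mem {T : Subalgebra ℂ (Matrix (I n) (I n) ℂ)}
    (hσ : ∀ j, gps id (fun a => sg (a j)) ∈ T) (a : I n) :
    gps (id : I n → I n) (ind a) ∈ T := by
  have key : ∀ j : Fin n, gps (id : I n → I n)
      (fun c => (1 + sg (a j) * sg (c j)) / 2) ∈ T := by
    intro j
    have h1 : gps (id : I n → I n) (fun c => (1 + sg (a j) * sg (c j)) / 2)
        = (2⁻¹ : ℂ) • (1 + sg (a j) • gps id (fun c => sg (c j))) := by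
      rw [← gps_one, gps_smul, gps_add, gps_smul]
      refine gps_congr rfl (funext fun c => ?_)
      simp only [Pi.smul_apply, Pi.add_apply, Pi.one_apply, smul_eq_mul]
      ring
    rw [h1]
    exact T.smul_mem (T.add_mem T.one_mem (T.smul_mem (hσ j) _)) _
  have := gpsId_prod_mem _ key Finset.univ
  convert this using 2
  funext c
  rcases eq_or_ne c a with rfl | h
  · simp [ind, sg_mul_self]
  · obtain ⟨j, hj⟩ : ∃ j, c j ≠ a j := by
      by_contra hc
      push_neg at hc
      exact h (funext hc)
    rw [ind, if_neg h]
    refine (Finset.prod_eq_zero (Finset.mem_univ j) ?_).symm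
    rw [sg_mul_sg_of_ne (Ne.symm hj)]
    norm_num

/-- multi-flip function described by a list -/
def flipL (l : List (Fin n)) (a : I n) : I n := fun k => if k ∈ l then !a k else a k

theorem X_list_prod (u : ℂ) (hu : u ≠ 0) :
    ∀ l : List (Fin n), l.Nodup →
      ∃ ε : I n → ℂ, (∀ a, ε a ≠ 0) ∧
        (l.map (fun j => u • X n j)).prod = gps (flipL l) ε := by
  intro l
  induction l with
  | nil =>
      intro _
      refine ⟨fun _ => 1, fun _ => one_ne_zero, ?_⟩
      rw [List.map_nil, List.prod_nil, ← gps_one]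
      exact gps_congr (funext fun a => funext fun k => by simp [flipL]) rfl
  | cons j l ih =>
      intro hnd
      obtain ⟨hj, hnd'⟩ := List.nodup_cons.1 hnd
      obtain ⟨ε, hε, hprod⟩ := ih hnd'
      refine ⟨fun a => u * (εX n j a * ε (flip j a)), fun a => by
        exact mul_ne_zero hu (mul_ne_zero (εX_ne_zero j a) (hε _)), ?_⟩
      rw [List.map_cons, List.prod_cons, hprod, X, smul_mul_assoc, gps_mul, gps_smul]
      refine gps_congr (funext fun a => funext fun k => ?_) rfl
      rcases eq_or_ne k j with rfl | hk
      · simp [flipL, Function.comp, flip_apply_self, if_neg hj]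
      · simp only [Function.comp_apply, flipL, flip_apply_ne _ _ _ hk, List.mem_cons]
        have : (k ∈ l ∨ k = j) ↔ k ∈ l := by
          constructor
          · rintro (h | rfl)
            · exact h
            · exact absurd rfl hk
          · exact Or.inl
        by_cases hkl : k ∈ l <;> simp [hkl, hk]

theorem flipL_eq (a b : I n) (l : List (Fin n))
    (hl : ∀ k, k ∈ l ↔ a k ≠ b k) : flipL l a = b := by
  funext k
  by_cases hk : k ∈ l
  · have := (hl k).1 hk
    rw [flipL]
    rw [if_pos hk]
    cases hak : a k <;> cases hbk : b k <;> simp_all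
  · have := (hl k).2
    rw [flipL, if_neg hk]
    by_contra hne
    exact hk ((hl k).2 hne)

theorem ind_mul_gps_mul_ind (a b : I n) (f : I n → I n) (ε : I n → ℂ) (hab : f a = b) :
    gps id (ind a) * gps f ε * gps id (ind b) = ε a • Matrix.single a b 1 := by
  rw [gps_mul, gps_mul]
  ext x y
  simp only [gps, Matrix.of_apply, Matrix.smul_apply, Matrix.single,
    smul_eq_mul, Function.comp_apply, id_eq]
  by_cases hx : x = a
  · subst hx
    by_cases hy : y = b
    · subst hy
      simp [ind, hab]
    · rw [if_neg (fun h : y = f x => hy (h.trans hab)), if_neg (fun h => hy h.2.symm), mul_zero]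
  · simp only [ind, if_neg hx, zero_mul, mul_zero, ite_self]
    rw [if_neg (fun h : a = x ∧ b = y => hx h.1.symm), mul_zero]

/-- THE GENERATION LEMMA: a subalgebra containing u•X j and u•Y j for a sign u is everything -/
theorem gen_top (T : Subalgebra ℂ (Matrix (I n) (I n) ℂ)) (u : ℂ) (hu : u = 1 ∨ u = -1)
    (hX : ∀ j, u • X n j ∈ T) (hY : ∀ j, u • Y n j ∈ T) : T = ⊤ := by
  classical
  have hu2 : u * u = 1 := by rcases hu with rfl | rfl <;> ring
  have hune : u ≠ 0 := by rcases hu with rfl | rfl <;> norm_num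
  -- σ₃ matrices
  have hσ : ∀ j, gps id (fun a => sg (a j)) ∈ T := by
    intro j
    have h1 : gps id (fun a : I n => sg (a j))
        = (-Complex.I) • ((u • X n j) * (u • Y n j)) := by
      rw [smul_mul_smul_comm, hu2, one_smul, X_mul_Y_self, gps_smul]
      refine gps_congr rfl (funext fun a => ?_)
      simp only [Pi.smul_apply, smul_eq_mul]
      rw [← mul_assoc, neg_mul, Complex.I_mul_I, neg_neg, one_mul]
    rw [h1]
    exact T.smul_mem (T.mul_mem (hX j) (hY j)) _
  have hind : ∀ a, gps (id : I n → I n) (ind a) ∈ T := ind_mem hσ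
  -- standard basis matrices
  have hstd : ∀ a b, Matrix.single a b (1 : ℂ) ∈ T := by
    intro a b
    set S : Finset (Fin n) := Finset.univ.filter (fun k => a k ≠ b k) with hS
    obtain ⟨ε, hε, hprod⟩ := X_list_prod u hune S.toList (Finset.nodup_toList S)
    have hmem : (S.toList.map (fun j => u • X n j)).prod ∈ T := by
      refine Submonoid.list_prod_mem _ fun x hx => ?_
      simp only [List.mem_map] at hx
      obtain ⟨j, _, rfl⟩ := hx
      exact hX j
    rw [hprod] at hmem
    have hab : flipL S.toList a = b := by
      refine flipL_eq a b _ fun k => ?_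
      rw [Finset.mem_toList, hS, Finset.mem_filter]
      simp
    have key := ind_mul_gps_mul_ind a b (flipL S.toList) ε hab
    have : Matrix.single a b (1 : ℂ)
        = (ε a)⁻¹ • (gps id (ind a) * gps (flipL S.toList) ε * gps id (ind b)) := by
      rw [key, smul_smul, inv_mul_cancel₀ (hε a), one_smul]
    rw [this]
    exact T.smul_mem (T.mul_mem (T.mul_mem (hind a) hmem) (hind b)) _
  -- conclude
  rw [eq_top_iff]
  intro M _
  rw [Matrix.matrix_eq_sum_single M]
  refine Subalgebra.sum_mem _ fun a _ => Subalgebra.sum_mem _ fun b _ => ?_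
  have : Matrix.single a b (M a b) = M a b • Matrix.single a b 1 := by
    rw [Matrix.smul_single, smul_eq_mul, mul_one]
  rw [this]
  exact T.smul_mem (hstd a b) _



variable (n)

/-- the gamma family indexed by `Fin (2*n+1)` -/
def Γ (k : Fin (2 * n + 1)) : Matrix (I n) (I n) ℂ :=
  if h : (k : ℕ) < 2 * n then
    if (k : ℕ) % 2 = 0 then X n ⟨(k : ℕ) / 2, by omega⟩ else Y n ⟨(k : ℕ) / 2, by omega⟩
  else Z n

def idx0 (j : Fin n) : Fin (2 * n + 1) := ⟨2 * (j : ℕ), by omega⟩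
def idx1 (j : Fin n) : Fin (2 * n + 1) := ⟨2 * (j : ℕ) + 1, by omega⟩
def idxZ : Fin (2 * n + 1) := ⟨2 * n, by omega⟩

variable {n}

theorem Γ_idx0 (j : Fin n) : Γ n (idx0 n j) = X n j := by
  have h1 : ((idx0 n j : Fin (2 * n + 1)) : ℕ) = 2 * (j : ℕ) := rfl
  rw [Γ, dif_pos (by rw [h1]; omega), if_pos (by rw [h1]; omega)]
  exact congrArg (X n) (Fin.ext (show ((idx0 n j : Fin (2*n+1)) : ℕ) / 2 = (j : ℕ) by
    rw [h1]; omega))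

theorem Γ_idx1 (j : Fin n) : Γ n (idx1 n j) = Y n j := by
  have h1 : ((idx1 n j : Fin (2 * n + 1)) : ℕ) = 2 * (j : ℕ) + 1 := rfl
  rw [Γ, dif_pos (by rw [h1]; omega), if_neg (by rw [h1]; omega)]
  exact congrArg (Y n) (Fin.ext (show ((idx1 n j : Fin (2*n+1)) : ℕ) / 2 = (j : ℕ) by
    rw [h1]; omega))

theorem Γ_idxZ : Γ n (idxZ n) = Z n := by
  rw [Γ, dif_neg]
  simp [idxZ]

theorem Γ_mul_self (k : Fin (2 * n + 1)) : Γ n k * Γ n k = 1 := by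
  rw [Γ]
  split
  · split
    · exact X_mul_X_self _
    · exact Y_mul_Y_self _
  · exact Z_mul_Z

theorem Γ_anticomm (k l : Fin (2 * n + 1)) (h : k ≠ l) :
    Γ n k * Γ n l + Γ n l * Γ n k = 0 := by
  have hne : (k : ℕ) ≠ (l : ℕ) := fun hh => h (Fin.ext hh)
  rw [Γ, Γ]
  by_cases hk : (k : ℕ) < 2 * n <;> by_cases hl : (l : ℕ) < 2 * n
  · rw [dif_pos hk, dif_pos hl]
    by_cases pk : (k : ℕ) % 2 = 0 <;> by_cases pl : (l : ℕ) % 2 = 0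
    · rw [if_pos pk, if_pos pl]
      exact X_anticomm _ _ (fun hh => hne (by have := Fin.mk.injEq ((k:ℕ)/2) _ ((l:ℕ)/2) _ ▸ hh; omega))
    · rw [if_pos pk, if_neg pl]
      exact XY_anticomm _ _
    · rw [if_neg pk, if_pos pl]
      rw [add_comm]
      exact XY_anticomm _ _
    · rw [if_neg pk, if_neg pl]
      exact Y_anticomm _ _ (fun hh => hne (by have := Fin.mk.injEq ((k:ℕ)/2) _ ((l:ℕ)/2) _ ▸ hh; omega))
  · rw [dif_pos hk, dif_neg hl]
    by_cases pk : (k : ℕ) % 2 = 0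
    · rw [if_pos pk]; exact XZ_anticomm _
    · rw [if_neg pk]; exact YZ_anticomm _
  · rw [dif_neg hk, dif_pos hl]
    by_cases pl : (l : ℕ) % 2 = 0
    · rw [if_pos pl]; rw [add_comm]; exact XZ_anticomm _
    · rw [if_neg pl]; rw [add_comm]; exact YZ_anticomm _
  · exfalso
    have h1 := k.isLt
    have h2 := l.isLt
    omega

/-- product of the diagonal pair matrices -/
theorem XY_list_prod :
    ((List.finRange n).map (fun j => X n j * Y n j)).prod
      = gps id (fun a => Complex.I ^ n * pf n Finset.univ a) := by
  have h1 : ((List.finRange n).map (fun j => X n j * Y n j))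
      = ((List.finRange n).map (fun j (a : I n) => Complex.I * sg (a j))).map gpsId := by
    rw [List.map_map]
    exact List.map_congr_left fun j _ => (X_mul_Y_self j)
  rw [h1, ← map_list_prod (gpsId (ι := I n))]
  show gps id (((List.finRange n).map fun j (c : I n) => Complex.I * sg (c j)).prod) = _
  refine gps_congr rfl (funext fun a => ?_)
  have h2 := map_list_prod (Pi.evalMonoidHom (fun _ : I n => ℂ) a)
    (((List.finRange n).map (fun j (c : I n) => Complex.I * sg (c j))))
  simp only [Pi.evalMonoidHom_apply] at h2
  show (((List.finRange n).map fun j (c : I n) => Complex.I * sg (c j)).prod) a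
    = Complex.I ^ n * pf n Finset.univ a
  rw [h2, List.map_map]
  have h3 : ∏ j : Fin n, (Complex.I * sg (a j))
      = ((List.finRange n).map fun j => Complex.I * sg (a j)).prod := Fin.prod_univ_def _
  show (List.map (fun j => Complex.I * sg (a j)) (List.finRange n)).prod
    = Complex.I ^ n * pf n Finset.univ a
  rw [← h3, Finset.prod_mul_distrib, Finset.prod_const, Finset.card_univ, Fintype.card_fin]
  rfl

theorem XY_list_prod_smul :
    ((List.finRange n).map (fun j => X n j * Y n j)).prod = (Complex.I ^ n) • Z n := by
  rw [XY_list_prod, Z, gps_smul]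
  rfl

theorem I_pow_ne_zero : (Complex.I) ^ n ≠ 0 := pow_ne_zero _ Complex.I_ne_zero

/-- KEY: any subalgebra of M × M containing the pairs (Γ k, -Γ k) is everything -/
theorem pair_gen_top
    (T : Subalgebra ℂ (Matrix (I n) (I n) ℂ × Matrix (I n) (I n) ℂ))
    (hG : ∀ k, ((Γ n k, -Γ n k) : _ × _) ∈ T) : T = ⊤ := by
  classical
  set c : ℂ := Complex.I ^ n with hc
  have hcne : c ≠ 0 := I_pow_ne_zero
  -- the central element
  set w : Matrix (I n) (I n) ℂ × Matrix (I n) (I n) ℂ :=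
    ((List.finRange n).map (fun j =>
      ((Γ n (idx0 n j), -Γ n (idx0 n j)) : _ × _) * (Γ n (idx1 n j), -Γ n (idx1 n j)))).prod
      * (Γ n (idxZ n), -Γ n (idxZ n)) with hw
  have hwT : w ∈ T := by
    refine T.mul_mem (Submonoid.list_prod_mem _ fun x hx => ?_) (hG _)
    simp only [List.mem_map] at hx
    obtain ⟨j, _, rfl⟩ := hx
    exact T.mul_mem (hG _) (hG _)
  have hw1 : w.1 = c • 1 := by
    rw [hw]
    have := map_list_prod (MonoidHom.fst (Matrix (I n) (I n) ℂ) (Matrix (I n) (I n) ℂ))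
      ((List.finRange n).map (fun j =>
        ((Γ n (idx0 n j), -Γ n (idx0 n j)) : _ × _) * (Γ n (idx1 n j), -Γ n (idx1 n j))))
    simp only [Prod.fst_mul, MonoidHom.coe_fst, List.map_map] at this ⊢
    rw [this, show ((Prod.fst ∘ fun j => ((Γ n (idx0 n j), -Γ n (idx0 n j)) : _ × _)
        * (Γ n (idx1 n j), -Γ n (idx1 n j)))) = fun j => X n j * Y n j from
        funext fun j => by simp [Γ_idx0, Γ_idx1], XY_list_prod_smul, Γ_idxZ,
      smul_mul_assoc, Z_mul_Z, hc]
  have hw2 : w.2 = -(c • 1) := by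
    rw [hw]
    have := map_list_prod (MonoidHom.snd (Matrix (I n) (I n) ℂ) (Matrix (I n) (I n) ℂ))
      ((List.finRange n).map (fun j =>
        ((Γ n (idx0 n j), -Γ n (idx0 n j)) : _ × _) * (Γ n (idx1 n j), -Γ n (idx1 n j))))
    simp only [Prod.snd_mul, MonoidHom.coe_snd, List.map_map] at this ⊢
    rw [this, show ((Prod.snd ∘ fun j => ((Γ n (idx0 n j), -Γ n (idx0 n j)) : _ × _)
        * (Γ n (idx1 n j), -Γ n (idx1 n j)))) = fun j => X n j * Y n j from
        funext fun j => by simp [Γ_idx0, Γ_idx1], XY_list_prod_smul, Γ_idxZ,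
      smul_mul_assoc, mul_neg, Z_mul_Z, hc, smul_neg]
  have hwval : w = ((c • 1, -(c • 1)) : _ × _) := Prod.ext hw1 hw2
  -- scalars
  have hscal : ∀ r : ℂ, ((r • 1, r • 1) : Matrix (I n) (I n) ℂ × Matrix (I n) (I n) ℂ) ∈ T := by
    intro r
    have : ((r • 1, r • 1) : Matrix (I n) (I n) ℂ × Matrix (I n) (I n) ℂ)
        = r • (1 : Matrix (I n) (I n) ℂ × Matrix (I n) (I n) ℂ) := rfl
    rw [this]
    exact T.smul_mem T.one_mem r
  -- idempotents
  have h10 : ((1, 0) : Matrix (I n) (I n) ℂ × Matrix (I n) (I n) ℂ) ∈ T := by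
    have key : ((1, 0) : Matrix (I n) (I n) ℂ × Matrix (I n) (I n) ℂ)
        = (2 * c)⁻¹ • (w + (c • 1, c • 1)) := by
      rw [hwval]
      refine Prod.ext ?_ ?_
      · show (1 : Matrix (I n) (I n) ℂ) = (2 * c)⁻¹ • (c • 1 + c • 1)
        rw [← add_smul, smul_smul, ← two_mul,
          inv_mul_cancel₀ (mul_ne_zero two_ne_zero hcne), one_smul]
      · show (0 : Matrix (I n) (I n) ℂ) = (2 * c)⁻¹ • (-(c • 1) + c • 1)
        rw [neg_add_cancel, smul_zero]
    rw [key]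
    exact T.smul_mem (T.add_mem hwT (hscal c)) _
  have h01 : ((0, 1) : Matrix (I n) (I n) ℂ × Matrix (I n) (I n) ℂ) ∈ T := by
    have key : ((0, 1) : Matrix (I n) (I n) ℂ × Matrix (I n) (I n) ℂ)
        = (2 * c)⁻¹ • ((c • 1, c • 1) + (-1 : ℂ) • w) := by
      rw [hwval]
      refine Prod.ext ?_ ?_
      · show (0 : Matrix (I n) (I n) ℂ) = (2 * c)⁻¹ • (c • 1 + (-1 : ℂ) • c • 1)
        rw [neg_one_smul, add_neg_cancel, smul_zero]
      · show (1 : Matrix (I n) (I n) ℂ) = (2 * c)⁻¹ • (c • 1 + (-1 : ℂ) • -(c • 1))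
        rw [neg_one_smul, neg_neg, ← add_smul, smul_smul, ← two_mul,
          inv_mul_cancel₀ (mul_ne_zero two_ne_zero hcne), one_smul]
    rw [key]
    exact T.smul_mem (T.add_mem (hscal c) (T.smul_mem hwT _)) _
  -- first and second projections are everything
  have hT1 : T.map (AlgHom.fst ℂ (Matrix (I n) (I n) ℂ) (Matrix (I n) (I n) ℂ)) = ⊤ := by
    refine gen_top _ 1 (Or.inl rfl) (fun j => ?_) (fun j => ?_)
    · rw [one_smul, ← Γ_idx0 j]
      exact ⟨_, hG (idx0 n j), rfl⟩
    · rw [one_smul, ← Γ_idx1 j]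
      exact ⟨_, hG (idx1 n j), rfl⟩
  have hT2 : T.map (AlgHom.snd ℂ (Matrix (I n) (I n) ℂ) (Matrix (I n) (I n) ℂ)) = ⊤ := by
    refine gen_top _ (-1) (Or.inr rfl) (fun j => ?_) (fun j => ?_)
    · rw [neg_one_smul, ← Γ_idx0 j]
      exact ⟨_, hG (idx0 n j), rfl⟩
    · rw [neg_one_smul, ← Γ_idx1 j]
      exact ⟨_, hG (idx1 n j), rfl⟩
  rw [eq_top_iff]
  rintro ⟨A, B⟩ -
  obtain ⟨pA, hpA, hpA1⟩ : ∃ p ∈ T, (AlgHom.fst ℂ _ _) p = A := by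
    have : A ∈ T.map (AlgHom.fst ℂ (Matrix (I n) (I n) ℂ) (Matrix (I n) (I n) ℂ)) := by
      rw [hT1]; trivial
    exact this
  obtain ⟨pB, hpB, hpB1⟩ : ∃ p ∈ T, (AlgHom.snd ℂ _ _) p = B := by
    have : B ∈ T.map (AlgHom.snd ℂ (Matrix (I n) (I n) ℂ) (Matrix (I n) (I n) ℂ)) := by
      rw [hT2]; trivial
    exact this
  have hA0 : ((A, 0) : _ × _) ∈ T := by
    have := T.mul_mem hpA h10
    have heq : pA * ((1, 0) : Matrix (I n) (I n) ℂ × Matrix (I n) (I n) ℂ) = (A, 0) := by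
      refine Prod.ext ?_ ?_
      · show pA.1 * 1 = A
        rw [mul_one]; exact hpA1
      · show pA.2 * 0 = 0
        rw [mul_zero]
    rwa [heq] at this
  have hB0 : ((0, B) : _ × _) ∈ T := by
    have := T.mul_mem hpB h01
    have heq : pB * ((0, 1) : Matrix (I n) (I n) ℂ × Matrix (I n) (I n) ℂ) = (0, B) := by
      refine Prod.ext ?_ ?_
      · show pB.1 * 0 = 0
        rw [mul_zero]
      · show pB.2 * 1 = B
        rw [mul_one]; exact hpB1
    rwa [heq] at this
  have : ((A, B) : _ × _) = (A, 0) + (0, B) := by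
    refine Prod.ext ?_ ?_ <;> simp
  rw [this]
  exact T.add_mem hA0 hB0



end Gamma

section Cliff

open CliffordAlgebra

variable {n : ℕ} (q : QuadraticForm ℂ (Fin (2 * n + 1) → ℂ))

/-- Clifford generators -/
def gen (i : Fin (2 * n + 1)) : CliffordAlgebra q := CliffordAlgebra.ι q (Pi.single i 1)

/-- ordered products of Clifford generators over a finset -/
def BB (s : Finset (Fin (2 * n + 1))) : CliffordAlgebra q :=
  ((s.sort (· ≤ ·)).map (gen q)).prod

/-- the span of the products -/
def SS : Submodule ℂ (CliffordAlgebra q) := Submodule.span ℂ (Set.range (BB q))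

variable (hq : ∀ x, q x = ∑ i, x i ^ 2)

include hq

theorem q_single (i : Fin (2 * n + 1)) : q (Pi.single i 1) = 1 := by
  rw [hq, Finset.sum_eq_single i]
  · rw [Pi.single_eq_same, one_pow]
  · intro k _ hk
    rw [Pi.single_eq_of_ne hk]
    norm_num
  · intro h
    exact absurd (Finset.mem_univ i) h

theorem polar_single (i j : Fin (2 * n + 1)) (h : i ≠ j) :
    QuadraticMap.polar q (Pi.single i 1) (Pi.single j 1) = 0 := by
  have key : ∀ k : Fin (2 * n + 1),
      ((Pi.single i 1 + Pi.single j 1 : Fin (2 * n + 1) → ℂ) k) ^ 2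
        - ((Pi.single i 1 : Fin (2 * n + 1) → ℂ) k) ^ 2
        - ((Pi.single j 1 : Fin (2 * n + 1) → ℂ) k) ^ 2 = 0 := by
    intro k
    simp only [Pi.add_apply, Pi.single_apply]
    rcases eq_or_ne k i with rfl | hki
    · rw [if_pos rfl, if_neg h]
      ring
    · rcases eq_or_ne k j with rfl | hkj
      · rw [if_neg hki, if_pos rfl]
        ring
      · rw [if_neg hki, if_neg hkj]
        ring
  rw [QuadraticMap.polar, hq, hq, hq, ← Finset.sum_sub_distrib, ← Finset.sum_sub_distrib]
  exact Finset.sum_eq_zero fun k _ => key k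

theorem gen_sq (i : Fin (2 * n + 1)) : gen q i * gen q i = 1 := by
  rw [gen, CliffordAlgebra.ι_sq_scalar, q_single q hq, _root_.map_one]

theorem gen_anti (i j : Fin (2 * n + 1)) (h : i ≠ j) :
    gen q i * gen q j = -(gen q j * gen q i) := by
  have h2 := CliffordAlgebra.ι_mul_ι_add_swap (Q := q) (Pi.single i 1) (Pi.single j 1)
  rw [polar_single q hq i j h, map_zero] at h2
  rw [gen, gen]
  exact eq_neg_of_add_eq_zero_left h2

theorem prod_sorted (l : List (Fin (2 * n + 1))) (hl : l.Pairwise (· < ·)) :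
    (l.map (gen q)).prod = BB q l.toFinset := by
  induction l with
  | nil => rw [BB, List.toFinset_nil, Finset.sort_empty]
  | cons j l ih =>
      have hl' : l.Pairwise (· < ·) := hl.of_cons
      have hjl : ∀ b ∈ l.toFinset, j ≤ b := fun b hb =>
        le_of_lt (List.rel_of_pairwise_cons hl (List.mem_toFinset.1 hb))
      have hjn : j ∉ l.toFinset := fun hc =>
        lt_irrefl j (List.rel_of_pairwise_cons hl (List.mem_toFinset.1 hc))
      rw [List.map_cons, List.prod_cons, ih hl', BB, BB, List.toFinset_cons,
        Finset.sort_insert (r := (· ≤ ·)) hjl hjn, List.map_cons, List.prod_cons]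

theorem BB_singleton (i : Fin (2 * n + 1)) : BB q {i} = gen q i := by
  rw [BB, Finset.sort_singleton, List.map_cons, List.map_nil, List.prod_cons,
    List.prod_nil, mul_one]

theorem BB_empty : BB q (∅ : Finset (Fin (2 * n + 1))) = 1 := by
  rw [BB, Finset.sort_empty]; rfl

/-- key reduction lemma -/
theorem gen_mul_prod_mem (l : List (Fin (2 * n + 1))) (hl : l.Pairwise (· < ·))
    (i : Fin (2 * n + 1)) :
    gen q i * (l.map (gen q)).prod ∈
      Submodule.span ℂ (BB q '' {s | ∀ x ∈ s, x = i ∨ x ∈ l}) := by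
  induction l generalizing i with
  | nil =>
      simp only [List.map_nil, List.prod_nil, mul_one]
      rw [← BB_singleton q hq i]
      exact Submodule.subset_span ⟨{i}, fun x hx => Or.inl (Finset.mem_singleton.1 hx), rfl⟩
  | cons j l ih =>
      have hl' : l.Pairwise (· < ·) := hl.of_cons
      rcases lt_trichotomy i j with hij | rfl | hij
      · have hsort : (i :: j :: l).Pairwise (· < ·) := by
          rw [List.pairwise_cons]
          exact ⟨fun b hb => by
            rcases List.mem_cons.1 hb with rfl | hb
            · exact hij
            · exact lt_trans hij (List.rel_of_pairwise_cons hl hb), hl⟩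
        have hprod := prod_sorted q hq _ hsort
        rw [List.map_cons, List.prod_cons] at hprod
        rw [hprod]
        refine Submodule.subset_span ⟨(i :: j :: l).toFinset, fun x hx => ?_, rfl⟩
        rcases List.mem_cons.1 (List.mem_toFinset.1 hx) with rfl | h
        · exact Or.inl rfl
        · exact Or.inr h
      · rw [List.map_cons, List.prod_cons, ← mul_assoc, gen_sq q hq, one_mul,
          prod_sorted q hq l hl']
        exact Submodule.subset_span ⟨l.toFinset, fun x hx =>
          Or.inr (List.mem_cons_of_mem _ (List.mem_toFinset.1 hx)), rfl⟩
      · rw [List.map_cons, List.prod_cons, ← mul_assoc,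
          gen_anti q hq i j (ne_of_gt hij), neg_mul, mul_assoc]
        refine Submodule.neg_mem _ ?_
        have hz := ih hl' i
        refine Submodule.span_induction (p := fun z _ => gen q j * z ∈
            Submodule.span ℂ (BB q '' {s | ∀ x ∈ s, x = i ∨ x ∈ j :: l}))
          ?_ ?_ ?_ ?_ hz
        · rintro z ⟨s, hs, rfl⟩
          have hjs : ∀ x ∈ s, j < x := by
            intro x hx
            rcases hs x hx with rfl | hx'
            · exact hij
            · exact List.rel_of_pairwise_cons hl hx'
          have hins : gen q j * BB q s = BB q (insert j s) := by
            rw [BB, BB, Finset.sort_insert (r := (· ≤ ·)) (fun b hb => le_of_lt (hjs b hb))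
              (fun hc => lt_irrefl j (hjs j hc)), List.map_cons, List.prod_cons]
          rw [hins]
          refine Submodule.subset_span ⟨insert j s, fun x hx => ?_, rfl⟩
          rcases Finset.mem_insert.1 hx with rfl | hx'
          · exact Or.inr List.mem_cons_self
          · rcases hs x hx' with rfl | hx''
            · exact Or.inl rfl
            · exact Or.inr (List.mem_cons_of_mem _ hx'')
        · show gen q j * 0 ∈ Submodule.span ℂ (BB q '' {s | ∀ x ∈ s, x = i ∨ x ∈ j :: l})
          rw [mul_zero]; exact Submodule.zero_mem _
        · intro x y _ _ hx hy
          show gen q j * (x + y) ∈ Submodule.span ℂ (BB q '' {s | ∀ x ∈ s, x = i ∨ x ∈ j :: l})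
          rw [mul_add]; exact Submodule.add_mem _ hx hy
        · intro a x _ hx
          show gen q j * (a • x) ∈ Submodule.span ℂ (BB q '' {s | ∀ x ∈ s, x = i ∨ x ∈ j :: l})
          rw [mul_smul_comm]; exact Submodule.smul_mem _ a hx

theorem gen_mul_mem (j : Fin (2 * n + 1)) (z : CliffordAlgebra q) (hz : z ∈ SS q) :
    gen q j * z ∈ SS q := by
  refine Submodule.span_induction (p := fun z _ => gen q j * z ∈ SS q) ?_ ?_ ?_ ?_ hz
  · rintro z ⟨s, rfl⟩
    have := gen_mul_prod_mem q hq (s.sort (· ≤ ·)) (Finset.sortedLT_sort s).pairwise j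
    have hBB : ((s.sort (· ≤ ·)).map (gen q)).prod = BB q s := rfl
    rw [hBB] at this
    refine Submodule.span_le.2 ?_ this
    rintro _ ⟨t, _, rfl⟩
    exact Submodule.subset_span ⟨t, rfl⟩
  · show gen q j * 0 ∈ SS q
    rw [mul_zero]; exact Submodule.zero_mem _
  · intro x y _ _ hx hy
    show gen q j * (x + y) ∈ SS q
    rw [mul_add]; exact Submodule.add_mem _ hx hy
  · intro a x _ hx
    show gen q j * (a • x) ∈ SS q
    rw [mul_smul_comm]; exact Submodule.smul_mem _ a hx

theorem prod_mul_mem (l : List (Fin (2 * n + 1))) (y : CliffordAlgebra q) (hy : y ∈ SS q) :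
    (l.map (gen q)).prod * y ∈ SS q := by
  induction l with
  | nil => rwa [List.map_nil, List.prod_nil, one_mul]
  | cons j l ih =>
      rw [List.map_cons, List.prod_cons, mul_assoc]
      exact gen_mul_mem q hq j _ ih

theorem SS_top : SS q = ⊤ := by
  rw [eq_top_iff]
  intro x hx
  clear hx
  induction x using CliffordAlgebra.induction with
  | algebraMap r =>
      rw [Algebra.algebraMap_eq_smul_one, ← BB_empty q hq]
      exact Submodule.smul_mem _ r (Submodule.subset_span ⟨∅, rfl⟩)
  | ι v =>
      have hv : ι q v = ∑ i, v i • gen q i := by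
        have hv2 : v = ∑ i, v i • (Pi.single i 1 : Fin (2 * n + 1) → ℂ) := by
          funext k
          rw [Finset.sum_apply]
          rw [Finset.sum_eq_single k]
          · rw [Pi.smul_apply, Pi.single_eq_same, smul_eq_mul, mul_one]
          · intro i _ hik
            rw [Pi.smul_apply, Pi.single_eq_of_ne (Ne.symm hik), smul_eq_mul, mul_zero]
          · intro h
            exact absurd (Finset.mem_univ k) h
        calc ι q v = ι q (∑ i, v i • (Pi.single i 1 : Fin (2 * n + 1) → ℂ)) := by
              rw [← hv2]
          _ = ∑ i, v i • gen q i := by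
              rw [map_sum]
              exact Finset.sum_congr rfl fun i _ => by rw [_root_.map_smul]; rfl
      rw [hv]
      refine Submodule.sum_mem _ fun i _ => Submodule.smul_mem _ _ ?_
      rw [← BB_singleton q hq i]
      exact Submodule.subset_span ⟨{i}, rfl⟩
  | mul a b ha hb =>
      refine Submodule.span_induction (p := fun z _ => z * b ∈ SS q) ?_ ?_ ?_ ?_ ha
      · rintro z ⟨s, rfl⟩
        exact prod_mul_mem q hq (s.sort (· ≤ ·)) b hb
      · show (0 : CliffordAlgebra q) * b ∈ SS q
        rw [zero_mul]; exact Submodule.zero_mem _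
      · intro x y _ _ hx hy
        show (x + y) * b ∈ SS q
        rw [add_mul]; exact Submodule.add_mem _ hx hy
      · intro c x _ hx
        show (c • x) * b ∈ SS q
        rw [smul_mul_assoc]; exact Submodule.smul_mem _ c hx
  | add a b ha hb => exact Submodule.add_mem _ ha hb

theorem cliff_finite : Module.Finite ℂ (CliffordAlgebra q) := by
  classical
  refine ⟨⟨Finset.univ.image (BB q), ?_⟩⟩
  rw [Finset.coe_image, Finset.coe_univ, Set.image_univ]
  exact SS_top q hq

theorem cliff_finrank_le :
    Module.finrank ℂ (CliffordAlgebra q) ≤ 2 ^ (2 * n + 1) := by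
  classical
  have h1 : Module.finrank ℂ (CliffordAlgebra q)
      = Module.finrank ℂ (⊤ : Submodule ℂ (CliffordAlgebra q)) :=
    (finrank_top ℂ (CliffordAlgebra q)).symm
  rw [h1, ← SS_top q hq, SS]
  calc Module.finrank ℂ (Submodule.span ℂ (Set.range (BB q)))
      ≤ Fintype.card (Finset (Fin (2 * n + 1))) := finrank_range_le_card (BB q)
    _ = 2 ^ (2 * n + 1) := by rw [Fintype.card_finset, Fintype.card_fin]

end Cliff

section Final

variable {n : ℕ}

/-- the target algebra -/
abbrev MM (n : ℕ) := Matrix (I n) (I n) ℂ × Matrix (I n) (I n) ℂ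

/-- the pair of gamma representations -/
def G (n : ℕ) (k : Fin (2 * n + 1)) : MM n := (Γ n k, -Γ n k)

theorem Γ_rel (k l : Fin (2 * n + 1)) :
    Γ n k * Γ n l + Γ n l * Γ n k = if k = l then 2 else 0 := by
  rcases eq_or_ne k l with rfl | h
  · rw [if_pos rfl, Γ_mul_self, one_add_one_eq_two]
  · rw [if_neg h]
    exact Γ_anticomm k l h

theorem G_rel (k l : Fin (2 * n + 1)) :
    G n k * G n l + G n l * G n k = algebraMap ℂ (MM n) (if k = l then 2 else 0) := by
  have h1 : G n k * G n l + G n l * G n k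
      = ((Γ n k * Γ n l + Γ n l * Γ n k, Γ n k * Γ n l + Γ n l * Γ n k) : MM n) := by
    refine Prod.ext rfl ?_
    show -Γ n k * -Γ n l + -Γ n l * -Γ n k = Γ n k * Γ n l + Γ n l * Γ n k
    rw [neg_mul_neg, neg_mul_neg]
  rw [h1, Prod.algebraMap_apply]
  rcases eq_or_ne k l with rfl | h
  · rw [Γ_rel, if_pos rfl, if_pos rfl, map_ofNat]
  · rw [Γ_rel, if_neg h, if_neg h, map_zero]

/-- linear map underlying the representation -/
def fmap (n : ℕ) : (Fin (2 * n + 1) → ℂ) →ₗ[ℂ] MM n :=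
  ∑ k, (LinearMap.proj k : (Fin (2 * n + 1) → ℂ) →ₗ[ℂ] ℂ).smulRight (G n k)

theorem fmap_apply (x : Fin (2 * n + 1) → ℂ) : fmap n x = ∑ k, x k • G n k := by
  rw [fmap, LinearMap.sum_apply]
  exact Finset.sum_congr rfl fun k _ => rfl

variable (q : QuadraticForm ℂ (Fin (2 * n + 1) → ℂ)) (hq : ∀ x, q x = ∑ i, x i ^ 2)

include hq

theorem fmap_sq (x : Fin (2 * n + 1) → ℂ) :
    fmap n x * fmap n x = algebraMap ℂ (MM n) (q x) := by
  classical
  set A := fmap n x * fmap n x with hA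
  set B := algebraMap ℂ (MM n) (q x) with hB
  have expand : A = ∑ k, ∑ l, (x k * x l) • (G n k * G n l) := by
    rw [hA, fmap_apply, Finset.sum_mul_sum]
    exact Finset.sum_congr rfl fun k _ => Finset.sum_congr rfl fun l _ =>
      smul_mul_smul_comm (x k) (G n k) (x l) (G n l)
  have expand2 : A = ∑ k, ∑ l, (x k * x l) • (G n l * G n k) := by
    rw [expand, Finset.sum_comm]
    exact Finset.sum_congr rfl fun k _ => Finset.sum_congr rfl fun l _ => by
      rw [mul_comm (x l) (x k)]
  have doub : A + A = ∑ k, ∑ l, (x k * x l) • (G n k * G n l + G n l * G n k) := by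
    nth_rewrite 2 [expand2]
    rw [expand, ← Finset.sum_add_distrib]
    refine Finset.sum_congr rfl fun k _ => ?_
    rw [← Finset.sum_add_distrib]
    exact Finset.sum_congr rfl fun l _ => (smul_add _ _ _).symm
  have doub2 : A + A = B + B := by
    rw [doub, hB, hq]
    have hin : ∀ k : Fin (2 * n + 1),
        (∑ l, (x k * x l) • (G n k * G n l + G n l * G n k))
          = algebraMap ℂ (MM n) (x k ^ 2 + x k ^ 2) := by
      intro k
      rw [Finset.sum_eq_single k]
      · rw [G_rel, if_pos rfl, Algebra.smul_def, ← _root_.map_mul]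
        congr 1
        ring
      · intro l _ hlk
        rw [G_rel, if_neg (Ne.symm hlk), map_zero, smul_zero]
      · intro h
        exact absurd (Finset.mem_univ k) h
    rw [Finset.sum_congr rfl fun k _ => hin k, ← _root_.map_add, ← _root_.map_sum]
    congr 1
    rw [Finset.sum_add_distrib]
  have h2 : (2 : ℂ) • A = (2 : ℂ) • B := by
    rw [two_smul, two_smul]
    exact doub2
  exact smul_right_injective (MM n) (two_ne_zero) h2

/-- the representation -/
def φ : CliffordAlgebra q →ₐ[ℂ] MM n :=
  CliffordAlgebra.lift q ⟨fmap n, fmap_sq q hq⟩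

theorem φ_gen (k : Fin (2 * n + 1)) : φ q hq (gen q k) = G n k := by
  rw [φ, gen, CliffordAlgebra.lift_ι_apply, fmap_apply, Finset.sum_eq_single k]
  · rw [Pi.single_eq_same, one_smul]
  · intro l _ hlk
    rw [Pi.single_eq_of_ne hlk, zero_smul]
  · intro h
    exact absurd (Finset.mem_univ k) h

theorem φ_surjective : Function.Surjective (φ q hq) := by
  rw [← AlgHom.range_eq_top]
  refine pair_gen_top _ fun k => ?_
  exact ⟨gen q k, φ_gen q hq k⟩

omit hq in
theorem finrank_MM : Module.finrank ℂ (MM n) = 2 ^ (2 * n + 1) := by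
  classical
  have hcard : Fintype.card (I n) = 2 ^ n := by
    rw [Fintype.card_fun, Fintype.card_bool, Fintype.card_fin]
  rw [Module.finrank_prod, Module.finrank_matrix, hcard, Module.finrank_self, mul_one]
  have h2 : (2 : ℕ) ^ n * 2 ^ n = 2 ^ (n + n) := (pow_add 2 n n).symm
  rw [h2, ← two_mul, ← pow_succ']
  congr 1
  omega

theorem φ_injective : Function.Injective (φ q hq) := by
  haveI := cliff_finite q hq
  have hrank := LinearMap.finrank_range_add_finrank_ker (φ q hq).toLinearMap
  have hrange : LinearMap.range (φ q hq).toLinearMap = ⊤ :=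
    LinearMap.range_eq_top.2 (φ_surjective q hq)
  rw [hrange] at hrank
  have htop : Module.finrank ℂ (⊤ : Submodule ℂ (MM n)) = 2 ^ (2 * n + 1) := by
    rw [finrank_top, finrank_MM]
  rw [htop] at hrank
  have hle := cliff_finrank_le q hq
  have hker : Module.finrank ℂ (LinearMap.ker (φ q hq).toLinearMap) = 0 := by omega
  have hbot : LinearMap.ker (φ q hq).toLinearMap = ⊥ := Submodule.finrank_eq_zero.1 hker
  have hinj := LinearMap.ker_eq_bot.1 hbot
  exact fun a b hab => hinj hab

/-- product of algebra equivalences -/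
def algEquivProd {A B C D : Type*} [Semiring A] [Semiring B] [Semiring C] [Semiring D]
    [Algebra ℂ A] [Algebra ℂ B] [Algebra ℂ C] [Algebra ℂ D]
    (f : A ≃ₐ[ℂ] B) (g : C ≃ₐ[ℂ] D) : (A × C) ≃ₐ[ℂ] (B × D) :=
  { f.toRingEquiv.prodCongr g.toRingEquiv with
    commutes' := fun r => by
      show (f (algebraMap ℂ A r), g (algebraMap ℂ C r)) = algebraMap ℂ (B × D) r
      rw [Prod.algebraMap_apply, AlgEquiv.commutes, AlgEquiv.commutes] }

end Final
end Stmt7Aux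

theorem stmt7 (n : ℕ) (q : QuadraticForm ℂ (Fin (2 * n + 1) → ℂ))
    (hq : ∀ x, q x = ∑ i, x i ^ 2) :
    Nonempty (CliffordAlgebra q ≃ₐ[ℂ]
      (Matrix (Fin (2 ^ n)) (Fin (2 ^ n)) ℂ × Matrix (Fin (2 ^ n)) (Fin (2 ^ n)) ℂ)) := by
  classical
  have e1 : CliffordAlgebra q ≃ₐ[ℂ] Stmt7Aux.MM n :=
    AlgEquiv.ofBijective (Stmt7Aux.φ q hq)
      ⟨Stmt7Aux.φ_injective q hq, Stmt7Aux.φ_surjective q hq⟩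
  have e0 : Stmt7Aux.I n ≃ Fin (2 ^ n) :=
    Fintype.equivFinOfCardEq (by rw [Fintype.card_fun, Fintype.card_bool, Fintype.card_fin])
  have e2 : Matrix (Stmt7Aux.I n) (Stmt7Aux.I n) ℂ ≃ₐ[ℂ] Matrix (Fin (2 ^ n)) (Fin (2 ^ n)) ℂ :=
    Matrix.reindexAlgEquiv ℂ ℂ e0
  exact ⟨e1.trans (Stmt7Aux.algEquivProd e2 e2)⟩

end
end
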